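/- Let F be an algebraically closed field and let κ be a finitary functor (i.e., preserving filtered colimits) from the category of commutative F-algebras to the category of sets. Then for every nonzero commutative F-algebra E (i.e., 0 ≠ 1 in E), the map κ(F) → κ(E) induced by the structure homomorphism F → E is injective. -/

import Mathlib

open CategoryTheory Limits

/-- The category of commutative `F`-algebras, realized as commutative rings under `F`. -/
abbrev CommAlgUnderCat (F : Type) [CommRing F] : Type 1 := Under (CommRingCat.of F)

/-- The object of `CommAlgCat F` attached to a commutative `F`-algebra. -/
def ofAlg (F : Type) [CommRing F] (A : Type) [CommRing A] [Algebra F A] : CommAlgUnderCat F :=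
  Under.mk (CommRingCat.ofHom (algebraMap F A))

/-- The morphism of `CommAlgCat F` attached to an `F`-algebra homomorphism. -/
def ofAlgHom (F : Type) [CommRing F] {A B : Type} [CommRing A] [CommRing B]
    [Algebra F A] [Algebra F B] (f : A →ₐ[F] B) : ofAlg F A ⟶ ofAlg F B :=
  Under.homMk (CommRingCat.ofHom f.toRingHom)
    (by ext x; exact (f.commutes x))

section Aux

variable (F : Type) [CommRing F]

lemma ofAlgHom_comp {A B C : Type} [CommRing A] [CommRing B] [CommRing C]
    [Algebra F A] [Algebra F B] [Algebra F C] (f : A →ₐ[F] B) (g : B →ₐ[F] C) :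
    ofAlgHom F (g.comp f) = ofAlgHom F f ≫ ofAlgHom F g := by
  apply CategoryTheory.Under.UnderMorphism.ext
  rfl

lemma ofAlgHom_id (A : Type) [CommRing A] [Algebra F A] :
    ofAlgHom F (AlgHom.id F A) = 𝟙 (ofAlg F A) := by
  apply CategoryTheory.Under.UnderMorphism.ext
  rfl

/-- Nullstellensatz input: nonzero f.g. algebra over alg. closed field maps to the field. -/
lemma exists_algHom_to_base (F : Type) [Field F] [IsAlgClosed F]
    (A : Type) [CommRing A] [Nontrivial A] [Algebra F A] [Algebra.FiniteType F A] :
    Nonempty (A →ₐ[F] F) := by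
  obtain ⟨m, hm⟩ := Ideal.exists_maximal A
  letI : Field (A ⧸ m) := Ideal.Quotient.field m
  haveI : Algebra.FiniteType F (A ⧸ m) :=
    Algebra.FiniteType.of_surjective (Ideal.Quotient.mkₐ F m)
      (Ideal.Quotient.mkₐ_surjective F m)
  haveI : Module.Finite F (A ⧸ m) := finite_of_finite_type_of_isJacobsonRing F (A ⧸ m)
  haveI : Algebra.IsIntegral F (A ⧸ m) := Algebra.IsIntegral.of_finite F (A ⧸ m)
  have hsurj : Function.Surjective (algebraMap F (A ⧸ m)) :=
    IsAlgClosed.algebraMap_bijective_of_isIntegral.2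
  have hbij : Function.Bijective (Algebra.ofId F (A ⧸ m)) :=
    ⟨fun x y h => (algebraMap F (A ⧸ m)).injective h, hsurj⟩
  let e : F ≃ₐ[F] (A ⧸ m) := AlgEquiv.ofBijective (Algebra.ofId F (A ⧸ m)) hbij
  exact ⟨(e.symm.toAlgHom).comp (Ideal.Quotient.mkₐ F m)⟩

end Aux

section Colim

variable (F : Type) [Field F] (E : Type) [CommRing E] [Algebra F E]

/-- Index poset: finitely generated subalgebras of `E`. -/
abbrev FGSub : Type := {A : Subalgebra F E // A.FG}

lemma FGSub.sup_mem {A B : Subalgebra F E} (hA : A.FG) (hB : B.FG) : (A ⊔ B).FG := by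
  classical
  obtain ⟨s, hs⟩ := hA
  obtain ⟨t, ht⟩ := hB
  exact ⟨s ∪ t, by rw [Finset.coe_union, Algebra.adjoin_union, hs, ht]⟩

noncomputable instance : SemilatticeSup (FGSub F E) :=
  Subtype.semilatticeSup fun _ _ => FGSub.sup_mem F E

instance : Nonempty (FGSub F E) := ⟨⟨⊥, Subalgebra.fg_bot⟩⟩

/-- The diagram of finitely generated subalgebras of `E` in `CommAlgCat F`. -/
@[simps]
noncomputable def fgDiagram : FGSub F E ⥤ CommAlgUnderCat F where
  obj A := ofAlg F A.1
  map {A B} f := ofAlgHom F (Subalgebra.inclusion (leOfHom f))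
  map_id A := by
    have h : Subalgebra.inclusion (leOfHom (𝟙 A)) = AlgHom.id F A.1 :=
      AlgHom.ext fun x => rfl
    show ofAlgHom F (Subalgebra.inclusion (leOfHom (𝟙 A))) = _
    rw [h, ofAlgHom_id]
  map_comp {A B C} f g := by
    show ofAlgHom F _ = ofAlgHom F _ ≫ ofAlgHom F _
    rw [← ofAlgHom_comp]
    exact congrArg (ofAlgHom F) (AlgHom.ext fun x => rfl)

/-- The canonical cocone over `fgDiagram` with apex `E`. -/
@[simps]
noncomputable def fgCocone : Cocone (fgDiagram F E) where
  pt := ofAlg F E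
  ι :=
    { app := fun A => ofAlgHom F A.1.val
      naturality := fun A B f => by
        show ofAlgHom F _ ≫ ofAlgHom F _ = ofAlgHom F _ ≫ 𝟙 _
        rw [Category.comp_id, ← ofAlgHom_comp]
        exact congrArg (ofAlgHom F) (AlgHom.ext fun x => rfl) }

end Colim

section Colim2

variable (F : Type) [Field F] (E : Type) [CommRing E] [Algebra F E]

/-- The underlying cocone of types of `fgCocone` is a colimit. -/
noncomputable def fgTypeColimit :
    IsColimit ((forget CommRingCat).mapCocone
      ((Under.forget (CommRingCat.of F)).mapCocone (fgCocone F E))) := by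
  apply Types.FilteredColimit.isColimitOf
  · intro x
    change E at x
    exact ⟨⟨Algebra.adjoin F {x}, ⟨{x}, by simp⟩⟩,
      ⟨x, Algebra.self_mem_adjoin_singleton F x⟩, rfl⟩
  · intro i j xi xj h
    exact ⟨i ⊔ j, homOfLE le_sup_left, homOfLE le_sup_right, Subtype.ext h⟩

/-- A cocone in `Under X` is colimit if its underlying cocone is. -/
noncomputable def isColimitOfForgetUnder {C : Type*} [Category C] {X : C} {J : Type*} [Category J]
    [Nonempty J] {D : J ⥤ Under X} (c : Cocone D)
    (h : IsColimit ((Under.forget X).mapCocone c)) : IsColimit c where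
  desc s := Under.homMk (h.desc ((Under.forget X).mapCocone s)) (by
    obtain ⟨j⟩ := ‹Nonempty J›
    have hw := Under.w (c.ι.app j)
    have hw' := Under.w (s.ι.app j)
    have hf := h.fac ((Under.forget X).mapCocone s) j
    dsimp at hw hw' hf ⊢
    rw [← hw]
    erw [Category.assoc, hf, hw'])
  fac s j := by
    apply CategoryTheory.Under.UnderMorphism.ext
    have hf := h.fac ((Under.forget X).mapCocone s) j
    dsimp at hf ⊢
    exact hf
  uniq s m hm := by
    apply CategoryTheory.Under.UnderMorphism.ext
    refine h.uniq ((Under.forget X).mapCocone s) m.right fun j => ?_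
    have := congrArg Under.Hom.right (hm j)
    dsimp at this ⊢
    rw [← this]

end Colim2

/-- For a finitary set-valued functor `κ` on commutative algebras over an algebraically
closed field `F`, the map `κ(F) → κ(E)` induced by the structure morphism is injective
for every nonzero commutative `F`-algebra `E`. -/
theorem stmt2 (F : Type) [Field F] [IsAlgClosed F] (κ : CommAlgUnderCat F ⥤ Type)
    [PreservesFilteredColimits κ]
    (E : Type) [CommRing E] [Algebra F E] [Nontrivial E] :
    Function.Injective (κ.map (ofAlgHom F (Algebra.ofId F E))) := by
  intro a b hab
  haveI : ReflectsColimitsOfShape (FGSub F E) (forget CommRingCat) :=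
    reflectsColimitsOfShape_of_reflectsIsomorphisms
  have hR : IsColimit ((Under.forget (CommRingCat.of F)).mapCocone (fgCocone F E)) :=
    isColimitOfReflects (forget CommRingCat) (fgTypeColimit F E)
  have hU : IsColimit (fgCocone F E) := isColimitOfForgetUnder _ hR
  have hK : IsColimit (κ.mapCocone (fgCocone F E)) := isColimitOfPreserves κ hU
  set bot : FGSub F E := ⟨⊥, Subalgebra.fg_bot⟩ with hbot
  let η : ∀ A : FGSub F E, ofAlg F F ⟶ ofAlg F A.1 := fun A => ofAlgHom F (Algebra.ofId F A.1)
  have key1 : ∀ A : FGSub F E, η A ≫ (fgCocone F E).ι.app A = ofAlgHom F (Algebra.ofId F E) := by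
    intro A
    show ofAlgHom F _ ≫ ofAlgHom F _ = _
    rw [← ofAlgHom_comp]
    exact congrArg (ofAlgHom F) (AlgHom.ext fun x => rfl)
  have key2 : ∀ {A B : FGSub F E} (f : A ⟶ B), η A ≫ (fgDiagram F E).map f = η B := by
    intro A B f
    show ofAlgHom F _ ≫ ofAlgHom F _ = ofAlgHom F _
    rw [← ofAlgHom_comp]
    exact congrArg (ofAlgHom F) (AlgHom.ext fun x => Subtype.ext rfl)
  have h1 : (κ.mapCocone (fgCocone F E)).ι.app bot (κ.map (η bot) a)
      = (κ.mapCocone (fgCocone F E)).ι.app bot (κ.map (η bot) b) := by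
    show κ.map ((fgCocone F E).ι.app bot) (κ.map (η bot) a)
      = κ.map ((fgCocone F E).ι.app bot) (κ.map (η bot) b)
    erw [← FunctorToTypes.map_comp_apply, ← FunctorToTypes.map_comp_apply, key1]
    exact hab
  obtain ⟨k, f, g, hfg⟩ := (Types.FilteredColimit.isColimit_eq_iff _ hK).mp h1
  obtain rfl : f = g := Subsingleton.elim f g
  have hk : κ.map (η k) a = κ.map (η k) b := by
    erw [← key2 f, FunctorToTypes.map_comp_apply, FunctorToTypes.map_comp_apply]
    exact hfg
  haveI : Nontrivial k.1 :=
    nontrivial_of_ne 0 1 fun h => zero_ne_one (congrArg Subtype.val h)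
  haveI : Algebra.FiniteType F k.1 := (Subalgebra.fg_iff_finiteType k.1).mp k.2
  obtain ⟨φ⟩ := exists_algHom_to_base F k.1
  have hretract : η k ≫ ofAlgHom F φ = 𝟙 (ofAlg F F) := by
    rw [show η k = ofAlgHom F (Algebra.ofId F k.1) from rfl, ← ofAlgHom_comp, ← ofAlgHom_id F F]
    exact congrArg (ofAlgHom F) (AlgHom.ext fun x => by
      show φ (Algebra.ofId F k.1 x) = x
      rw [Algebra.ofId_apply, φ.commutes x, Algebra.algebraMap_self_apply])
  calc a = κ.map (𝟙 (ofAlg F F)) a := (FunctorToTypes.map_id_apply κ a).symm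
    _ = κ.map (ofAlgHom F φ) (κ.map (η k) a) := by
        rw [← FunctorToTypes.map_comp_apply, hretract]
    _ = κ.map (ofAlgHom F φ) (κ.map (η k) b) := by rw [hk]
    _ = κ.map (𝟙 (ofAlg F F)) b := by rw [← FunctorToTypes.map_comp_apply, hretract]
    _ = b := FunctorToTypes.map_id_apply κ b
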